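/- Let P be a graded poset, ℓ a positive integer, and [x,y] an interval of P. For any interval [x_i, y_j] of D^ℓ P corresponding to [x,y] (i.e., x_i a copy of x and y_j a copy of y), one has μ_k([x,y]) = μ_{kℓ}([x_i, y_j]). -/

import Mathlib

open scoped Classical

attribute [local instance] Fintype.ofFinite

/-- A rank function making a bounded poset graded of rank `n+1`. -/
def IsGraded (P : Type) [PartialOrder P] [BoundedOrder P] (ρ : P → ℕ) (n : ℕ) : Prop :=
  ρ ⊥ = 0 ∧ ρ ⊤ = n + 1 ∧ ∀ x y : P, x ⋖ y → ρ y = ρ x + 1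

/-- A poset is `r`-thick if every nonempty open interval has at least `r` elements. -/
def RThick (P : Type) [PartialOrder P] [Fintype P] (r : ℕ) : Prop :=
  ∀ x y : P, x < y → (∃ z, x < z ∧ z < y) →
    r ≤ (Finset.univ.filter fun z => x < z ∧ z < y).card

/-- The flag number `f_S(P)`: the number of chains of `P` whose set of ranks is `S`. -/
noncomputable def flagNum {P : Type} [PartialOrder P] [Fintype P] (ρ : P → ℕ)
    (S : Finset ℕ) : ℕ :=
  (Finset.univ.filter fun c : Finset P =>
    IsChain (· ≤ ·) (c : Set P) ∧ c.image ρ = S ∧ c.card = S.card).card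

/-- The flag number `f_S([x,y])` of the interval `[x,y]`, with ranks relative to `x`. -/
noncomputable def flagNumI {P : Type} [PartialOrder P] [Fintype P] (ρ : P → ℕ)
    (x y : P) (S : Finset ℕ) : ℕ :=
  (Finset.univ.filter fun c : Finset P =>
    IsChain (· ≤ ·) (c : Set P) ∧ (∀ z ∈ c, x < z ∧ z < y) ∧
      c.image (fun z => ρ z - ρ x) = S ∧ c.card = S.card).card

/-- The `k`-Möbius function `μ_k([x,y])`. -/
noncomputable def muk {P : Type} [PartialOrder P] [Fintype P] (k : ℝ) (x : P) (y : P) : ℝ :=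
  if x = y then 1
  else -1 - (1/k) * ∑ z ∈ (Finset.univ.filter fun z => x < z ∧ z < y).attach,
    muk k x z.val
termination_by (Finset.univ.filter fun w => w < y).card
decreasing_by
  have hz : (z : P) < y := (Finset.mem_filter.mp z.2).2.2
  apply Finset.card_lt_card
  rw [Finset.ssubset_iff_of_subset]
  · exact ⟨z, Finset.mem_filter.mpr ⟨Finset.mem_univ _, hz⟩,
      fun hc => absurd (Finset.mem_filter.mp hc).2 (lt_irrefl _)⟩
  · intro w hw
    exact Finset.mem_filter.mpr ⟨Finset.mem_univ _, (Finset.mem_filter.mp hw).2.trans hz⟩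

/-- The ordinary Möbius function of a finite poset. -/
noncomputable def mobius {P : Type} [PartialOrder P] [Fintype P] (x : P) (y : P) : ℤ :=
  if x = y then 1
  else -∑ z ∈ (Finset.univ.filter fun z => x ≤ z ∧ z < y).attach, mobius x z.val
termination_by (Finset.univ.filter fun w => w < y).card
decreasing_by
  have hz : (z : P) < y := (Finset.mem_filter.mp z.2).2.2
  apply Finset.card_lt_card
  rw [Finset.ssubset_iff_of_subset]
  · exact ⟨z, Finset.mem_filter.mpr ⟨Finset.mem_univ _, hz⟩,
      fun hc => absurd (Finset.mem_filter.mp hc).2 (lt_irrefl _)⟩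
  · intro w hw
    exact Finset.mem_filter.mpr ⟨Finset.mem_univ _, (Finset.mem_filter.mp hw).2.trans hz⟩

/-- A graded poset is `k`-Eulerian when `μ_k([x,y]) = (-1)^{ρ(y)-ρ(x)}` on every interval. -/
def IsKEulerian (P : Type) [PartialOrder P] [Fintype P] (ρ : P → ℕ) (k : ℝ) : Prop :=
  ∀ x y : P, x ≤ y → muk k x y = (-1 : ℝ) ^ (ρ y - ρ x)

/-- The flag `L^k` vector of a poset of rank `n+1`. -/
noncomputable def Lk {P : Type} [PartialOrder P] [Fintype P] (k : ℝ) (n : ℕ) (ρ : P → ℕ)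
    (S : Finset ℕ) : ℝ :=
  (-1 : ℝ) ^ (n - S.card) *
    ∑ T ∈ (Finset.Icc 1 n).powerset.filter (fun T => Finset.Icc 1 n \ S ⊆ T),
      (-(1/(2*k))) ^ T.card * (flagNum ρ T : ℝ)

/-- The flag `L^k` vector of an interval `[x,y]` of rank `n+1`. -/
noncomputable def LkI {P : Type} [PartialOrder P] [Fintype P] (k : ℝ) (n : ℕ) (ρ : P → ℕ)
    (x y : P) (S : Finset ℕ) : ℝ :=
  (-1 : ℝ) ^ (n - S.card) *
    ∑ T ∈ (Finset.Icc 1 n).powerset.filter (fun T => Finset.Icc 1 n \ S ⊆ T),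
      (-(1/(2*k))) ^ T.card * (flagNumI ρ x y T : ℝ)

/-- A set is even if it is a disjoint union of intervals of even cardinality. -/
def IsEvenSet (S : Finset ℕ) : Prop :=
  ∃ J : Finset (ℕ × ℕ),
    S = J.biUnion (fun p => Finset.Icc p.1 p.2) ∧
    (∀ p ∈ J, p.1 ≤ p.2 ∧ Even (p.2 + 1 - p.1)) ∧
    (∀ p ∈ J, ∀ q ∈ J, p ≠ q → Disjoint (Finset.Icc p.1 p.2) (Finset.Icc q.1 q.2))

/-- The horizontal `r`-fold duplication `D^r P`. -/
inductive Dup (P : Type) [PartialOrder P] [BoundedOrder P] (r : ℕ) : Type where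
  | bot : Dup P r
  | top : Dup P r
  | mid : {x : P // x ≠ ⊥ ∧ x ≠ ⊤} → Fin r → Dup P r

namespace Dup

variable {P : Type} [PartialOrder P] [BoundedOrder P] {r : ℕ}

def le : Dup P r → Dup P r → Prop
  | .bot, _ => True
  | .mid _ _, .bot => False
  | .mid x i, .mid y j => (x = y ∧ i = j) ∨ (x : P) < (y : P)
  | .mid _ _, .top => True
  | .top, .top => True
  | .top, _ => False

instance : PartialOrder (Dup P r) where
  le := Dup.le
  le_refl a := by cases a with
    | bot => trivial
    | top => trivial
    | mid x i => exact Or.inl ⟨rfl, rfl⟩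
  le_trans a b c hab hbc := by
    cases a with
    | bot => trivial
    | top =>
      cases b with
      | top =>
        cases c with
        | top => trivial
        | bot => exact hbc.elim
        | mid _ _ => exact hbc.elim
      | bot => exact hab.elim
      | mid _ _ => exact hab.elim
    | mid x i =>
      cases b with
      | bot => exact hab.elim
      | top =>
        cases c with
        | top => trivial
        | bot => exact hbc.elim
        | mid _ _ => exact hbc.elim
      | mid y j =>
        cases c with
        | bot => exact hbc.elim
        | top => trivial
        | mid z l =>
          rcases hab with ⟨rfl, rfl⟩ | h1
          · exact hbc
          · rcases hbc with ⟨rfl, rfl⟩ | h2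
            · exact Or.inr h1
            · exact Or.inr (h1.trans h2)
  le_antisymm a b hab hba := by
    cases a with
    | bot =>
      cases b with
      | bot => rfl
      | top => exact hba.elim
      | mid _ _ => exact hba.elim
    | top =>
      cases b with
      | top => rfl
      | bot => exact hab.elim
      | mid _ _ => exact hab.elim
    | mid x i =>
      cases b with
      | bot => exact hab.elim
      | top => exact hba.elim
      | mid y j =>
        rcases hab with ⟨rfl, rfl⟩ | h1
        · rfl
        · rcases hba with ⟨rfl, rfl⟩ | h2
          · exact absurd h1 (lt_irrefl _)
          · exact absurd (h1.trans h2) (lt_irrefl _)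

instance : BoundedOrder (Dup P r) where
  top := .top
  bot := .bot
  le_top a := by cases a <;> trivial
  bot_le a := trivial

instance [Finite P] : Finite (Dup P r) :=
  Finite.of_injective
    (fun a : Dup P r =>
      (match a with
        | .bot => none
        | .top => some none
        | .mid x i => some (some (x, i)) :
        Option (Option ({x : P // x ≠ ⊥ ∧ x ≠ ⊤} × Fin r))))
    (by intro a b h; cases a <;> cases b <;> simp_all)

/-- The rank function of `D^r P`, where `P` has rank `n+1`. -/
def rank (ρ : P → ℕ) (n : ℕ) : Dup P r → ℕ
  | .bot => 0
  | .top => n + 1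
  | .mid x _ => ρ x.val

/-- `a ∈ D^r P` is a copy of `x ∈ P`. -/
def IsCopy (a : Dup P r) (x : P) : Prop :=
  (x = ⊥ ∧ a = .bot) ∨ (x = ⊤ ∧ a = .top) ∨ ∃ h i, a = .mid ⟨x, h⟩ i

end Dup


namespace Dup

variable {P : Type} [PartialOrder P] [BoundedOrder P] {r : ℕ}

theorem le_def' {a b : Dup P r} : a ≤ b ↔ Dup.le a b := Iff.rfl

theorem mid_lt_mid {w v : {x : P // x ≠ ⊥ ∧ x ≠ ⊤}} {i j : Fin r} :
    (Dup.mid w i : Dup P r) < Dup.mid v j ↔ (w : P) < (v : P) := by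
  constructor
  · intro h
    rcases lt_iff_le_not_ge.mp h with ⟨h1, h2⟩
    rcases (le_def'.mp h1) with ⟨rfl, rfl⟩ | h
    · exact absurd (le_refl (Dup.mid w i)) h2
    · exact h
  · intro h
    refine lt_iff_le_not_ge.mpr ⟨Or.inr h, fun hc => ?_⟩
    rcases (le_def'.mp hc) with ⟨rfl, rfl⟩ | h'
    · exact absurd h (lt_irrefl _)
    · exact absurd (h.trans h') (lt_irrefl _)

theorem bot_lt_mid {w : {x : P // x ≠ ⊥ ∧ x ≠ ⊤}} {i : Fin r} :
    (Dup.bot : Dup P r) < Dup.mid w i :=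
  lt_iff_le_not_ge.mpr ⟨trivial, fun h => (le_def'.mp h).elim⟩

theorem mid_lt_top {w : {x : P // x ≠ ⊥ ∧ x ≠ ⊤}} {i : Fin r} :
    (Dup.mid w i : Dup P r) < Dup.top :=
  lt_iff_le_not_ge.mpr ⟨trivial, fun h => (le_def'.mp h).elim⟩

theorem not_lt_bot' {c : Dup P r} : ¬ c < Dup.bot := by
  intro h
  rcases lt_iff_le_not_ge.mp h with ⟨h1, h2⟩
  cases c with
  | bot => exact h2 le_rfl
  | top => exact (le_def'.mp h1).elim
  | mid w i => exact (le_def'.mp h1).elim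

theorem not_top_lt' {c : Dup P r} : ¬ Dup.top < c := by
  intro h
  rcases lt_iff_le_not_ge.mp h with ⟨h1, h2⟩
  cases c with
  | bot => exact (le_def'.mp h1).elim
  | top => exact h2 le_rfl
  | mid w i => exact (le_def'.mp h1).elim

theorem copy_lt_mid {a : Dup P r} {x : P} (ha : IsCopy a x)
    (w : {z : P // z ≠ ⊥ ∧ z ≠ ⊤}) (i : Fin r) :
    a < Dup.mid w i ↔ x < (w : P) := by
  rcases ha with ⟨rfl, rfl⟩ | ⟨rfl, rfl⟩ | ⟨h, j, rfl⟩
  · simp only [bot_lt_mid, true_iff, bot_lt_iff_ne_bot]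
    exact w.2.1
  · constructor
    · intro hc
      exact ((le_def'.mp (lt_iff_le_not_ge.mp hc).1)).elim
    · intro hc
      exact absurd hc not_top_lt
  · exact mid_lt_mid

theorem mid_lt_copy {b : Dup P r} {y : P} (hb : IsCopy b y)
    (w : {z : P // z ≠ ⊥ ∧ z ≠ ⊤}) (i : Fin r) :
    Dup.mid w i < b ↔ (w : P) < y := by
  rcases hb with ⟨rfl, rfl⟩ | ⟨rfl, rfl⟩ | ⟨h, j, rfl⟩
  · constructor
    · intro hc; exact absurd hc not_lt_bot'
    · intro hc; exact absurd hc not_lt_bot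
  · simp only [mid_lt_top, true_iff, lt_top_iff_ne_top]
    exact w.2.2
  · exact mid_lt_mid

theorem eq_of_copy {a : Dup P r} {x y : P} (hx : IsCopy a x) (hy : IsCopy a y) :
    x = y := by
  rcases hx with ⟨rfl, rfl⟩ | ⟨rfl, rfl⟩ | ⟨h, j, rfl⟩ <;>
    rcases hy with ⟨h1, h2⟩ | ⟨h1, h2⟩ | ⟨h', j', h2⟩ <;> simp_all

theorem copy_eq_copy (hbt : (⊥ : P) ≠ ⊤) {a b : Dup P r} {x : P}
    (hx : IsCopy a x) (hy : IsCopy b x) (hab : a ≤ b) : a = b := by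
  rcases hx with ⟨rfl, rfl⟩ | ⟨rfl, rfl⟩ | ⟨h, j, rfl⟩ <;>
    rcases hy with ⟨h1, h2⟩ | ⟨h1, h2⟩ | ⟨h', j', h2⟩
  · rw [h2]
  · exact (hbt h1).elim
  · exact absurd h'.1 (by simp)
  · exact (hbt h1.symm).elim
  · rw [h2]
  · exact absurd h'.2 (by simp)
  · exact absurd h1 h.1
  · exact absurd h1 h.2
  · subst h2
    rcases (le_def'.mp hab) with ⟨he, rfl⟩ | hlt
    · rw [he]
    · exact absurd hlt (lt_irrefl _)

end Dup

theorem muk_dup_aux {P : Type} [PartialOrder P] [BoundedOrder P] [Finite P]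
    {ℓ : ℕ} (hℓ : 1 ≤ ℓ) (hbt : (⊥ : P) ≠ ⊤) (k : ℝ) (hk : 0 < k)
    (x : P) (a : Dup P ℓ) (ha : Dup.IsCopy a x) :
    ∀ m : ℕ, ∀ y : P, ∀ b : Dup P ℓ,
      (Finset.univ.filter fun w : P => w < y).card ≤ m →
      x ≤ y → a ≤ b → Dup.IsCopy b y → muk k x y = muk (k * ℓ) a b := by
  intro m
  induction m with
  | zero =>
    intro y b hm hxy hab hb
    have hxy' : x = y := by
      rcases lt_or_eq_of_le hxy with h | h
      · exfalso
        have hmem : x ∈ Finset.univ.filter fun w : P => w < y :=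
          Finset.mem_filter.mpr ⟨Finset.mem_univ _, h⟩
        have := Finset.card_pos.mpr ⟨x, hmem⟩
        omega
      · exact h
    subst hxy'
    have hab' : a = b := Dup.copy_eq_copy hbt ha hb hab
    subst hab'
    rw [muk, muk]
    simp
  | succ m ih =>
    intro y b hm hxy hab hb
    by_cases hxy' : x = y
    · subst hxy'
      have hab' : a = b := Dup.copy_eq_copy hbt ha hb hab
      subst hab'
      rw [muk, muk]
      simp
    · have hab' : a ≠ b := fun h => hxy' (Dup.eq_of_copy ha (h ▸ hb))
      conv_lhs => rw [muk]
      conv_rhs => rw [muk]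
      rw [if_neg hxy', if_neg hab']
      rw [Finset.sum_attach _ (fun z => muk k x z),
        Finset.sum_attach _ (fun c => muk (k * ℓ) a c)]
      have hℓ0 : (0 : ℝ) < (ℓ : ℝ) := by exact_mod_cast hℓ
      have hsum :
          ∑ c ∈ Finset.univ.filter (fun c : Dup P ℓ => a < c ∧ c < b), muk (k * ℓ) a c
            = ∑ p ∈ (Finset.univ.filter fun z : P => x < z ∧ z < y) ×ˢ
                (Finset.univ : Finset (Fin ℓ)), muk k x p.1 := by
        refine Finset.sum_nbij'
          (fun c => match c with
            | Dup.mid w i => ((w : P), i)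
            | _ => (x, ⟨0, hℓ⟩))
          (fun p => if h : p.1 ≠ ⊥ ∧ p.1 ≠ ⊤ then Dup.mid ⟨p.1, h⟩ p.2 else Dup.bot)
          ?_ ?_ ?_ ?_ ?_
        · intro c hc
          obtain ⟨-, hac, hcb⟩ := Finset.mem_filter.mp hc
          cases c with
          | bot => exact absurd hac Dup.not_lt_bot'
          | top => exact absurd hcb Dup.not_top_lt'
          | mid w i =>
            refine Finset.mem_product.mpr ⟨Finset.mem_filter.mpr
              ⟨Finset.mem_univ _, ?_, ?_⟩, Finset.mem_univ _⟩
            · exact (Dup.copy_lt_mid ha w i).mp hac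
            · exact (Dup.mid_lt_copy hb w i).mp hcb
        · intro p hp
          obtain ⟨hp1, -⟩ := Finset.mem_product.mp hp
          obtain ⟨-, hxp, hpy⟩ := Finset.mem_filter.mp hp1
          have hne : p.1 ≠ ⊥ ∧ p.1 ≠ ⊤ := ⟨ne_bot_of_gt hxp, ne_top_of_lt hpy⟩
          simp only [dif_pos hne]
          exact Finset.mem_filter.mpr ⟨Finset.mem_univ _,
            (Dup.copy_lt_mid ha ⟨p.1, hne⟩ p.2).mpr hxp,
            (Dup.mid_lt_copy hb ⟨p.1, hne⟩ p.2).mpr hpy⟩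
        · intro c hc
          obtain ⟨-, hac, hcb⟩ := Finset.mem_filter.mp hc
          cases c with
          | bot => exact absurd hac Dup.not_lt_bot'
          | top => exact absurd hcb Dup.not_top_lt'
          | mid w i =>
            show (if h : (w : P) ≠ ⊥ ∧ (w : P) ≠ ⊤ then Dup.mid ⟨(w : P), h⟩ i
              else Dup.bot) = Dup.mid w i
            rw [dif_pos w.2]
        · intro p hp
          obtain ⟨hp1, -⟩ := Finset.mem_product.mp hp
          obtain ⟨-, hxp, hpy⟩ := Finset.mem_filter.mp hp1
          have hne : p.1 ≠ ⊥ ∧ p.1 ≠ ⊤ := ⟨ne_bot_of_gt hxp, ne_top_of_lt hpy⟩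
          simp only [dif_pos hne]
        · intro c hc
          obtain ⟨-, hac, hcb⟩ := Finset.mem_filter.mp hc
          cases c with
          | bot => exact absurd hac Dup.not_lt_bot'
          | top => exact absurd hcb Dup.not_top_lt'
          | mid w i =>
            have hxw : x < (w : P) := (Dup.copy_lt_mid ha w i).mp hac
            have hwy : (w : P) < y := (Dup.mid_lt_copy hb w i).mp hcb
            have hcard : (Finset.univ.filter fun v : P => v < (w : P)).card ≤ m := by
              have hss : (Finset.univ.filter fun v : P => v < (w : P)) ⊂
                  (Finset.univ.filter fun v : P => v < y) := by
                rw [Finset.ssubset_iff_of_subset]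
                · exact ⟨w, Finset.mem_filter.mpr ⟨Finset.mem_univ _, hwy⟩,
                    fun hcon => absurd (Finset.mem_filter.mp hcon).2 (lt_irrefl _)⟩
                · intro v hv
                  exact Finset.mem_filter.mpr ⟨Finset.mem_univ _,
                    (Finset.mem_filter.mp hv).2.trans hwy⟩
              have := Finset.card_lt_card hss
              omega
            exact (ih (w : P) (Dup.mid w i) hcard hxw.le (le_of_lt hac)
              (Or.inr (Or.inr ⟨w.2, i, rfl⟩))).symm
      rw [hsum, Finset.sum_product]
      simp only [Finset.sum_const, Finset.card_univ, Fintype.card_fin, nsmul_eq_mul]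
      rw [← Finset.mul_sum]
      have hk' : k ≠ 0 := ne_of_gt hk
      have hℓ' : (ℓ : ℝ) ≠ 0 := ne_of_gt hℓ0
      field_simp

/-- `μ_k([x,y]) = μ_{kℓ}([x_i,y_j])` for corresponding intervals of `D^ℓ P`. -/
theorem muk_dup {P : Type} [PartialOrder P] [BoundedOrder P] [Finite P]
    (n ℓ : ℕ) (hℓ : 1 ≤ ℓ) (ρ : P → ℕ) (hP : IsGraded P ρ n) (k : ℝ) (hk : 0 < k)
    (x y : P) (hxy : x ≤ y) (a b : Dup P ℓ) (hab : a ≤ b)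
    (ha : Dup.IsCopy a x) (hb : Dup.IsCopy b y) :
    muk k x y = muk (k * ℓ) a b := by
  have hbt : (⊥ : P) ≠ ⊤ := by
    intro h
    have h1 := hP.1
    have h2 := hP.2.1
    rw [h, h2] at h1
    omega
  exact muk_dup_aux hℓ hbt k hk x a ha _ y b le_rfl hxy hab hb
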